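/- Let $\mu$ be a Borel probability measure on $\mathbb{R}$ with Borel transform $B_\mu(z) = \int \frac{d\mu(E)}{E-z}$. Suppose there are $0<m\le 1$ and $C_1>0$ such that $\mathrm{Im}\, B_{\mu}(E_c + i s) \le C_1 s^{m-1}$ for all $s > 0$. Then for any $\delta > 0$ and $E_1 > 0$, $\int_{E_c - E_1}^{E_c + E_1} \mathrm{Im}\, B_{\mu}(E + i\delta)\, dE \le 2\pi C_1 E_1^{m}$. -/

import Mathlib

open MeasureTheory Complex


lemma arctan_le_pi_mul_div (x : ℝ) (hx : 0 ≤ x) :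
    Real.arctan x ≤ Real.pi * x / (1 + x) := by
  have hpi := Real.pi_gt_three
  have h1x : (0:ℝ) < 1 + x := by linarith
  rcases le_or_gt x (Real.pi - 1) with h | h
  · have harc : Real.arctan x ≤ x := by
      rcases eq_or_lt_of_le hx with h0 | h0
      · simp [← h0]
      · have h2 := Real.lt_tan (by simpa using Real.arctan_strictMono h0)
          (Real.arctan_lt_pi_div_two x)
        rw [Real.tan_arctan] at h2
        exact h2.le
    rw [le_div_iff₀ h1x]
    nlinarith
  · have harc := (Real.arctan_lt_pi_div_two x).le
    rw [le_div_iff₀ h1x]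
    nlinarith

/-- The key scalar inequality. -/
lemma key_arctan_ineq (δ E1 t : ℝ) (hδ : 0 < δ) (hE1 : 0 < E1) :
    Real.arctan ((E1 - t) / δ) + Real.arctan ((E1 + t) / δ)
      ≤ 2 * Real.pi * E1 * (E1 + δ) / (t ^ 2 + (E1 + δ) ^ 2) := by
  have hpi := Real.pi_pos
  have hs : (0:ℝ) < E1 + δ := by linarith
  have hQ : (0:ℝ) < t ^ 2 + (E1 + δ) ^ 2 := by positivity
  rcases le_or_gt (t ^ 2 + δ ^ 2 - E1 ^ 2) 0 with hD | hD
  · -- here the RHS is at least π, the LHS at most π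
    have hf : Real.arctan ((E1 - t) / δ) + Real.arctan ((E1 + t) / δ) ≤ Real.pi := by
      have h1 := (Real.arctan_lt_pi_div_two ((E1 - t) / δ)).le
      have h2 := (Real.arctan_lt_pi_div_two ((E1 + t) / δ)).le
      linarith
    have hg : Real.pi ≤ 2 * Real.pi * E1 * (E1 + δ) / (t ^ 2 + (E1 + δ) ^ 2) := by
      rw [le_div_iff₀ hQ]
      nlinarith
    linarith
  · -- addition formula case
    have huv : ((E1 - t) / δ) * ((E1 + t) / δ) < 1 := by
      rw [div_mul_div_comm, div_lt_one (by positivity)]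
      nlinarith
    rw [Real.arctan_add huv]
    have hX : ((E1 - t) / δ + (E1 + t) / δ) / (1 - (E1 - t) / δ * ((E1 + t) / δ))
        = 2 * E1 * δ / (t ^ 2 + δ ^ 2 - E1 ^ 2) := by
      rw [div_eq_div_iff]
      · field_simp
        ring
      · have : (0:ℝ) < 1 - (E1 - t) / δ * ((E1 + t) / δ) := by linarith [huv]
        linarith
      · exact hD.ne'
    rw [hX]
    set X : ℝ := 2 * E1 * δ / (t ^ 2 + δ ^ 2 - E1 ^ 2) with hXdef
    have hX0 : 0 ≤ X := by positivity
    have h1X : (0:ℝ) < 1 + X := by linarith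
    have hXD : X * (t ^ 2 + δ ^ 2 - E1 ^ 2) = 2 * E1 * δ := by
      rw [hXdef]; field_simp
    calc Real.arctan X ≤ Real.pi * X / (1 + X) := arctan_le_pi_mul_div X hX0
      _ ≤ 2 * Real.pi * E1 * (E1 + δ) / (t ^ 2 + (E1 + δ) ^ 2) := by
          rw [div_le_div_iff₀ h1X hQ]
          nlinarith [mul_pos (mul_pos hpi (mul_pos hE1 hE1)) hD,
            mul_le_mul_of_nonneg_right (hXD.le) hQ.le]


lemma borel_im (c δ x : ℝ) (hδ : 0 < δ) :
    (((x:ℂ) - ((c:ℂ) + δ * Complex.I))⁻¹).im = δ / ((x - c) ^ 2 + δ ^ 2) := by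
  have hre : ((x:ℂ) - ((c:ℂ) + δ * Complex.I)).re = x - c := by simp
  have him : ((x:ℂ) - ((c:ℂ) + δ * Complex.I)).im = -δ := by simp
  rw [Complex.inv_im, Complex.normSq_apply, hre, him]
  have hpos : 0 < (x - c) * (x - c) + -δ * -δ := by nlinarith [sq_nonneg (x - c)]
  rw [div_eq_div_iff hpos.ne' (by positivity)]
  ring

lemma borel_ne (c δ x : ℝ) (hδ : 0 < δ) : (x:ℂ) - ((c:ℂ) + δ * Complex.I) ≠ 0 := by
  intro h
  have h2 := congrArg Complex.im h
  simp at h2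
  exact hδ.ne' h2

lemma borel_integrable (μ : Measure ℝ) [IsFiniteMeasure μ] (c δ : ℝ) (hδ : 0 < δ) :
    Integrable (fun x : ℝ => ((x:ℂ) - ((c:ℂ) + δ * Complex.I))⁻¹) μ := by
  have hcont : Continuous fun x : ℝ => ((x:ℂ) - ((c:ℂ) + δ * Complex.I))⁻¹ :=
    (Complex.continuous_ofReal.sub continuous_const).inv₀ fun x => borel_ne c δ x hδ
  refine (integrable_const (1/δ)).mono' hcont.aestronglyMeasurable ?_
  filter_upwards with x
  rw [norm_inv]
  have h1 : δ ≤ ‖(x:ℂ) - ((c:ℂ) + δ * Complex.I)‖ := by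
    have h2 := Complex.abs_im_le_norm ((x:ℂ) - ((c:ℂ) + δ * Complex.I))
    simp at h2
    rw [abs_of_pos hδ] at h2
    exact h2
  rw [one_div]
  exact inv_anti₀ hδ h1

lemma borel_im_integral (μ : Measure ℝ) [IsFiniteMeasure μ] (c δ : ℝ) (hδ : 0 < δ) :
    (∫ x : ℝ, ((x:ℂ) - ((c:ℂ) + δ * Complex.I))⁻¹ ∂μ).im
      = ∫ x : ℝ, δ / ((x - c) ^ 2 + δ ^ 2) ∂μ := by
  have := integral_im (μ := μ) (𝕜 := ℂ) (borel_integrable μ c δ hδ)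
  simp only [RCLike.im_to_complex] at this
  rw [← this]
  exact integral_congr_ae (Filter.Eventually.of_forall fun x => borel_im c δ x hδ)

/-- If `Im B_μ(E_c + is) ≤ C₁ s^{m-1}` for all `s > 0`, then for any `δ > 0` and `E₁ > 0`,
`∫_{E_c-E₁}^{E_c+E₁} Im B_μ(E + iδ) dE ≤ 2π C₁ E₁^m`. -/
theorem integral_imaginary_borel_transform_bound
    (μ : Measure ℝ) [IsProbabilityMeasure μ]
    (m C1 Ec : ℝ) (hm0 : 0 < m) (hm1 : m ≤ 1) (hC1 : 0 < C1)
    (hIm : ∀ s : ℝ, 0 < s →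
      (∫ E : ℝ, ((E : ℂ) - ((Ec : ℂ) + s * Complex.I))⁻¹ ∂μ).im ≤ C1 * s ^ (m - 1)) :
    ∀ δ E1 : ℝ, 0 < δ → 0 < E1 →
      (∫ E in (Ec - E1)..(Ec + E1),
          (∫ x : ℝ, ((x : ℂ) - ((E : ℂ) + δ * Complex.I))⁻¹ ∂μ).im)
        ≤ 2 * Real.pi * C1 * E1 ^ m := by
  intro δ E1 hδ hE1
  have hπ := Real.pi_pos
  have hab : Ec - E1 ≤ Ec + E1 := by linarith
  have hs : (0:ℝ) < E1 + δ := by linarith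
  -- rewrite the integrand as the Poisson integral
  have h1 : (∫ E in (Ec - E1)..(Ec + E1),
        (∫ x : ℝ, ((x : ℂ) - ((E : ℂ) + δ * Complex.I))⁻¹ ∂μ).im)
      = ∫ E in (Ec - E1)..(Ec + E1), ∫ x : ℝ, δ / ((x - E) ^ 2 + δ ^ 2) ∂μ :=
    intervalIntegral.integral_congr fun E _ => borel_im_integral μ E δ hδ
  rw [h1, intervalIntegral.integral_of_le hab]
  -- Fubini
  haveI : IsFiniteMeasure (volume.restrict (Set.Ioc (Ec - E1) (Ec + E1))) :=
    ⟨by rw [Measure.restrict_apply_univ, Real.volume_Ioc]; exact ENNReal.ofReal_lt_top⟩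
  have hswap : (∫ E in Set.Ioc (Ec - E1) (Ec + E1), ∫ x : ℝ, δ / ((x - E) ^ 2 + δ ^ 2) ∂μ)
      = ∫ x : ℝ, (∫ E in Set.Ioc (Ec - E1) (Ec + E1), δ / ((x - E) ^ 2 + δ ^ 2)) ∂μ := by
    apply integral_integral_swap
    have hcont : Continuous (Function.uncurry fun (E x : ℝ) => δ / ((x - E) ^ 2 + δ ^ 2)) := by
      apply Continuous.div continuous_const
      · fun_prop
      · intro p
        positivity
    refine (integrable_const (1/δ)).mono' hcont.aestronglyMeasurable ?_
    filter_upwards with p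
    simp only [Function.uncurry]
    rw [Real.norm_of_nonneg (by positivity), div_le_div_iff₀ (by positivity) hδ]
    nlinarith [sq_nonneg (p.2 - p.1)]
  rw [hswap]
  -- evaluate the inner integral
  have hinner : ∀ x : ℝ, (∫ E in Set.Ioc (Ec - E1) (Ec + E1), δ / ((x - E) ^ 2 + δ ^ 2))
      = Real.arctan ((Ec + E1 - x) / δ) - Real.arctan ((Ec - E1 - x) / δ) := by
    intro x
    rw [← intervalIntegral.integral_of_le hab]
    have hderiv : ∀ E ∈ Set.uIcc (Ec - E1) (Ec + E1),
        HasDerivAt (fun E => Real.arctan ((E - x) / δ)) (δ / ((x - E) ^ 2 + δ ^ 2)) E := by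
      intro E _
      have hd1 : HasDerivAt (fun E : ℝ => (E - x) / δ) (1 / δ) E := by
        simpa using ((hasDerivAt_id E).sub_const x).div_const δ
      have hd2 := (Real.hasDerivAt_arctan ((E - x) / δ)).comp E hd1
      refine hd2.congr_deriv ?_
      have hp1 : (0:ℝ) < 1 + ((E - x) / δ) ^ 2 := by positivity
      field_simp
      ring
    exact intervalIntegral.integral_eq_sub_of_hasDerivAt hderiv
      ((Continuous.div continuous_const (by fun_prop)
        (fun E => by positivity)).intervalIntegrable _ _)
  -- integrability of the dominating function
  have hInt : Integrable
      (fun x : ℝ => 2 * Real.pi * E1 * ((E1 + δ) / ((x - Ec) ^ 2 + (E1 + δ) ^ 2))) μ := by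
    refine (((borel_integrable μ Ec (E1 + δ) hs).im.const_mul
      (2 * Real.pi * E1)).congr (Filter.Eventually.of_forall fun x => ?_))
    simp only [RCLike.im_to_complex]
    rw [borel_im Ec (E1 + δ) x hs]
  -- pointwise comparison
  have hbound : (∫ x : ℝ, (∫ E in Set.Ioc (Ec - E1) (Ec + E1), δ / ((x - E) ^ 2 + δ ^ 2)) ∂μ)
      ≤ ∫ x : ℝ, 2 * Real.pi * E1 * ((E1 + δ) / ((x - Ec) ^ 2 + (E1 + δ) ^ 2)) ∂μ := by
    refine integral_mono_of_nonneg ?_ hInt ?_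
    · filter_upwards with x
      rw [hinner x]
      have := Real.arctan_strictMono.monotone
        (show (Ec - E1 - x) / δ ≤ (Ec + E1 - x) / δ by gcongr <;> linarith)
      simp only [Pi.zero_apply]
      linarith
    · filter_upwards with x
      rw [hinner x]
      have hk := key_arctan_ineq δ E1 (Ec - x) hδ hE1
      have e1 : (Ec - E1 - x) / δ = -((E1 - (Ec - x)) / δ) := by ring
      have e2 : (Ec + E1 - x) / δ = (E1 + (Ec - x)) / δ := by ring
      rw [e1, e2, Real.arctan_neg, sub_neg_eq_add]
      calc Real.arctan ((E1 + (Ec - x)) / δ) + Real.arctan ((E1 - (Ec - x)) / δ)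
          ≤ 2 * Real.pi * E1 * (E1 + δ) / ((Ec - x) ^ 2 + (E1 + δ) ^ 2) := by linarith
        _ = 2 * Real.pi * E1 * ((E1 + δ) / ((x - Ec) ^ 2 + (E1 + δ) ^ 2)) := by
            rw [show (Ec - x) ^ 2 = (x - Ec) ^ 2 by ring, mul_div_assoc]
  refine hbound.trans ?_
  -- compute the dominating integral
  have h2 : (∫ x : ℝ, 2 * Real.pi * E1 * ((E1 + δ) / ((x - Ec) ^ 2 + (E1 + δ) ^ 2)) ∂μ)
      = 2 * Real.pi * E1 *
        (∫ x : ℝ, ((x : ℂ) - ((Ec : ℂ) + (E1 + δ : ℝ) * Complex.I))⁻¹ ∂μ).im := by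
    rw [integral_const_mul, borel_im_integral μ Ec (E1 + δ) hs]
  rw [h2]
  have h3 := hIm (E1 + δ) hs
  have h4 : (E1 + δ : ℝ) ^ (m - 1) ≤ E1 ^ (m - 1) :=
    Real.rpow_le_rpow_of_nonpos hE1 (by linarith) (by linarith)
  have h5 : E1 ^ m = E1 * E1 ^ (m - 1) := by
    nth_rewrite 1 [show m = 1 + (m - 1) by ring]
    rw [Real.rpow_add hE1, Real.rpow_one]
  have h6 : (0:ℝ) < E1 ^ (m - 1) := Real.rpow_pos_of_pos hE1 _
  calc 2 * Real.pi * E1 * (∫ x : ℝ, ((x : ℂ) - ((Ec : ℂ) + (E1 + δ : ℝ) * Complex.I))⁻¹ ∂μ).im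
      ≤ 2 * Real.pi * E1 * (C1 * (E1 + δ) ^ (m - 1)) := by
        refine mul_le_mul_of_nonneg_left h3 (by positivity)
    _ ≤ 2 * Real.pi * E1 * (C1 * E1 ^ (m - 1)) := by
        refine mul_le_mul_of_nonneg_left (by nlinarith) (by positivity)
    _ = 2 * Real.pi * C1 * E1 ^ m := by rw [h5]; ring
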